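/- (τ-symbol independence) On a step-2 nilpotent Lie group, for a convolution operator with kernel k, the τ-symbol a_τ(h,ν) = k̂(ᵗL⁻¹_{τh+(1-τ)g}(ν)) evaluated along the diagonal pairing equals k̂(ᵗL⁻¹_h(ν)) for every τ ∈ [0,1]; i.e., the τ-symbol does not depend on τ. -/
import Mathlib

open MeasureTheory Polynomial

/-- Euclidean dot product on ℝᴺ. -/
def dot {N : ℕ} (a b : Fin N → ℝ) : ℝ := ∑ i, a i * b i

/-- `L_h(w) = -w - (1/2)[h,w]`. -/
noncomputable def Lop {N : ℕ} (B : (Fin N → ℝ) →ₗ[ℝ] (Fin N → ℝ) →ₗ[ℝ] (Fin N → ℝ))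
    (h w : Fin N → ℝ) : Fin N → ℝ :=
  -w - (1 / 2 : ℝ) • B h w

/-- The inverse `L_h⁻¹(w) = -w + (1/2)[h,w]` (valid for step-2 nilpotent brackets). -/
noncomputable def Linv {N : ℕ} (B : (Fin N → ℝ) →ₗ[ℝ] (Fin N → ℝ) →ₗ[ℝ] (Fin N → ℝ))
    (h w : Fin N → ℝ) : Fin N → ℝ :=
  -w + (1 / 2 : ℝ) • B h w

/-- The inverse transpose `ᵗL_h⁻¹` with respect to the Euclidean pairing:
`(ᵗL_h⁻¹ ν)ᵢ = ⟨L_h⁻¹ eᵢ, ν⟩`. -/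
noncomputable def tLinv {N : ℕ} (B : (Fin N → ℝ) →ₗ[ℝ] (Fin N → ℝ) →ₗ[ℝ] (Fin N → ℝ))
    (h ν : Fin N → ℝ) : Fin N → ℝ :=
  fun i => dot (Linv B h (Pi.single i 1)) ν

/- ### Auxiliary lemmas on `dot` -/

lemma dot_add_right' {N : ℕ} (a b c : Fin N → ℝ) : dot a (b + c) = dot a b + dot a c := by
  simp [dot, mul_add, Finset.sum_add_distrib]

lemma dot_smul_left' {N : ℕ} (r : ℝ) (a b : Fin N → ℝ) : dot (r • a) b = r * dot a b := by
  simp [dot, Finset.mul_sum, mul_assoc]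

lemma dot_add_left' {N : ℕ} (a b c : Fin N → ℝ) : dot (a + b) c = dot a c + dot b c := by
  simp [dot, add_mul, Finset.sum_add_distrib]

lemma dot_neg_left' {N : ℕ} (a b : Fin N → ℝ) : dot (-a) b = - dot a b := by
  simp [dot]

lemma dot_zero_left' {N : ℕ} (b : Fin N → ℝ) : dot 0 b = 0 := by
  simp [dot]

lemma dot_single_left' {N : ℕ} (i : Fin N) (b : Fin N → ℝ) : dot (Pi.single i 1) b = b i := by
  simp [dot, Pi.single_apply, ite_mul, Finset.sum_ite_eq]

lemma dot_sum_left' {N : ℕ} {ι : Type*} (s : Finset ι) (f : ι → (Fin N → ℝ)) (b : Fin N → ℝ) :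
    dot (∑ j ∈ s, f j) b = ∑ j ∈ s, dot (f j) b := by
  simp [dot, Finset.sum_apply, Finset.sum_mul]
  rw [Finset.sum_comm]

/-- Expanding a vector in the standard basis inside a bilinear pairing. -/
lemma sum_mul_dot_single' {N : ℕ} (T : (Fin N → ℝ) →ₗ[ℝ] (Fin N → ℝ)) (w ν : Fin N → ℝ) :
    ∑ j, w j * dot (T (Pi.single j 1)) ν = dot (T w) ν := by
  have hw : (∑ j, w j • (Pi.single j 1 : Fin N → ℝ)) = w := by
    ext k
    simp [Finset.sum_apply, Pi.single_apply, mul_ite, Finset.sum_ite_eq]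
  calc ∑ j, w j * dot (T (Pi.single j 1)) ν
      = ∑ j, dot (w j • T (Pi.single j 1)) ν := by simp [dot_smul_left']
    _ = ∑ j, dot (T (w j • (Pi.single j 1 : Fin N → ℝ))) ν := by simp [_root_.map_smul]
    _ = dot (∑ j, T (w j • (Pi.single j 1 : Fin N → ℝ))) ν := (dot_sum_left' _ _ _).symm
    _ = dot (T (∑ j, w j • (Pi.single j 1 : Fin N → ℝ))) ν := by rw [_root_.map_sum]
    _ = dot (T w) ν := by rw [hw]

/- ### Determinant of a unipotent map -/

lemma det_one_add_of_sq_eq_zero' {n : ℕ} (A : Matrix (Fin n) (Fin n) ℝ) (hA : A * A = 0) :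
    (1 + A).det = 1 := by
  have hnil : IsNilpotent A := ⟨2, by rw [pow_two, hA]⟩
  have hu : IsUnit A.charpolyRev := Matrix.isUnit_charpolyRev_of_isNilpotent hnil
  obtain ⟨r, -, hr⟩ := Polynomial.isUnit_iff.mp hu
  have h0 : Polynomial.eval 0 A.charpolyRev = 1 := Matrix.eval_charpolyRev
  have hr1 : r = 1 := by rw [← hr] at h0; simpa using h0
  have hp : A.charpolyRev = 1 := by rw [← hr, hr1, map_one]
  have heval := congrArg (Polynomial.eval (-1 : ℝ)) hp
  rw [Matrix.charpolyRev, ← Polynomial.coe_evalRingHom, RingHom.map_det] at heval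
  have hm : (1 - (Polynomial.X : ℝ[X]) • A.map Polynomial.C).map (Polynomial.evalRingHom (-1))
      = 1 + A := by
    ext i j
    by_cases hij : i = j <;>
      simp [hij, Matrix.map_apply, Matrix.one_apply, Matrix.sub_apply, Matrix.smul_apply]
  rw [RingHom.mapMatrix_apply, hm] at heval
  simpa using heval

/-- A linear self-map of `Fin N → ℝ` with determinant `1` preserves Lebesgue measure,
and hence integrals. -/
lemma integral_comp_det_one' {N : ℕ} (Φ : (Fin N → ℝ) →ₗ[ℝ] (Fin N → ℝ))
    (hdet : LinearMap.det Φ = 1) (F : (Fin N → ℝ) → ℂ) :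
    ∫ ν, F (Φ ν) = ∫ ν, F ν := by
  have hne : LinearMap.det Φ ≠ 0 := by rw [hdet]; norm_num
  have hmap : Measure.map Φ (volume : Measure (Fin N → ℝ)) = volume := by
    rw [Measure.map_linearMap_addHaar_eq_smul_addHaar volume hne, hdet]
    simp
  have hmp : MeasurePreserving Φ (volume : Measure (Fin N → ℝ)) volume :=
    ⟨Φ.continuous_of_finiteDimensional.measurable, hmap⟩
  have hemb : MeasurableEmbedding (Φ : (Fin N → ℝ) → (Fin N → ℝ)) :=
    (Φ.equivOfDetNeZero hne).toContinuousLinearEquiv.toHomeomorph.measurableEmbedding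
  exact hmp.integral_comp hemb F

/-- τ-symbol independence: for a convolution kernel `k̂` on a step-2 nilpotent Lie
group, the τ-quantized operator built from the symbol `k̂(ᵗL⁻¹_{τh+(1-τ)g}(ν))`
agrees with the one built from `k̂(ᵗL⁻¹_h(ν))`, for every τ; i.e. the τ-symbol does
not depend on τ. -/
theorem tau_symbol_independent (N : ℕ)
    (B : (Fin N → ℝ) →ₗ[ℝ] (Fin N → ℝ) →ₗ[ℝ] (Fin N → ℝ))
    (hanti : ∀ x y, B x y = -B y x)
    (hnil : ∀ x y z, B x (B y z) = 0)
    (khat u : (Fin N → ℝ) → ℂ) (h : Fin N → ℝ) (τ : ℝ) :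
    (∫ g : Fin N → ℝ, ∫ ν : Fin N → ℝ,
        Complex.exp (Complex.I * (dot (h - g) ν : ℝ)) *
          khat (tLinv B (τ • h + (1 - τ) • g) ν) * u g) =
    (∫ g : Fin N → ℝ, ∫ ν : Fin N → ℝ,
        Complex.exp (Complex.I * (dot (h - g) ν : ℝ)) *
          khat (tLinv B h ν) * u g) := by
  refine integral_congr_ae (Filter.Eventually.of_forall fun g => ?_)
  set x : Fin N → ℝ := τ • h + (1 - τ) • g with hx
  -- key bracket identities
  have hBzero : ∀ w : Fin N → ℝ, B w w = 0 := by
    intro w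
    have h2 : B w w = -B w w := hanti w w
    have hsum : B w w + B w w = 0 := by nth_rewrite 1 [h2]; abel
    have h3 : (2 : ℝ) • B w w = 0 := by rw [two_smul]; exact hsum
    simpa using (smul_eq_zero.mp h3).resolve_left (by norm_num)
  have hK1 : B x (h - g) = B h (h - g) := by
    have hg : B g (h - g) = B h (h - g) := by
      rw [map_sub, map_sub, hBzero, hBzero, hanti g h]
      abel
    rw [hx, map_add, _root_.map_smul, _root_.map_smul]
    simp only [LinearMap.add_apply, LinearMap.smul_apply]
    rw [hg, ← add_smul]
    ring_nf
    simp
  -- matrix of the correction map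
  set M : Matrix (Fin N) (Fin N) ℝ :=
    fun i j => (1 / 2 : ℝ) * ((B h (Pi.single i 1)) j - (B x (Pi.single i 1)) j) with hM
  have hmulVec : ∀ (ν : Fin N → ℝ) (i : Fin N),
      M.mulVec ν i
        = (1 / 2 : ℝ) * (dot (B h (Pi.single i 1)) ν - dot (B x (Pi.single i 1)) ν) := by
    intro ν i
    simp only [Matrix.mulVec, dotProduct, hM, dot]
    rw [mul_sub, Finset.mul_sum, Finset.mul_sum, ← Finset.sum_sub_distrib]
    exact Finset.sum_congr rfl fun j _ => by ring
  have hdotM : ∀ (w ν : Fin N → ℝ),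
      dot w (M.mulVec ν) = (1 / 2 : ℝ) * (dot (B h w) ν - dot (B x w) ν) := by
    intro w ν
    have h0 : dot w (M.mulVec ν) = ∑ j, w j * (M.mulVec ν j) := rfl
    have h1 : (∑ j, w j * (M.mulVec ν j))
        = ∑ j, w j * ((1 / 2 : ℝ)
            * (dot (B h (Pi.single j 1)) ν - dot (B x (Pi.single j 1)) ν)) :=
      Finset.sum_congr rfl fun j _ => by rw [hmulVec]
    rw [h0, h1]
    have hsplit : ∀ y : Fin N → ℝ, ∑ j, w j * dot (B y (Pi.single j 1)) ν = dot (B y w) ν :=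
      fun y => sum_mul_dot_single' (B y) w ν
    calc ∑ j, w j * ((1 / 2 : ℝ)
            * (dot (B h (Pi.single j 1)) ν - dot (B x (Pi.single j 1)) ν))
        = (1 / 2 : ℝ) * ((∑ j, w j * dot (B h (Pi.single j 1)) ν)
            - ∑ j, w j * dot (B x (Pi.single j 1)) ν) := by
          rw [mul_sub, Finset.mul_sum, Finset.mul_sum, ← Finset.sum_sub_distrib]
          exact Finset.sum_congr rfl fun j _ => by ring
      _ = (1 / 2 : ℝ) * (dot (B h w) ν - dot (B x w) ν) := by rw [hsplit, hsplit]
  -- M is square-zero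
  have hMM : ∀ ν : Fin N → ℝ, M.mulVec (M.mulVec ν) = 0 := by
    intro ν
    funext i
    rw [Pi.zero_apply, hmulVec, hdotM, hdotM, hnil, hnil, hnil, hnil, dot_zero_left']
    ring
  have hMsq : M * M = 0 := by
    ext i j
    have hc := congrFun (hMM (Pi.single j 1)) i
    rw [Matrix.mulVec_mulVec] at hc
    simpa using hc
  -- the substitution map
  set Φ : (Fin N → ℝ) →ₗ[ℝ] (Fin N → ℝ) := Matrix.toLin' (1 + M) with hΦdef
  have hΦdet : LinearMap.det Φ = 1 := by
    rw [hΦdef, LinearMap.det_toLin']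
    exact det_one_add_of_sq_eq_zero' M hMsq
  have hΦ : ∀ ν, Φ ν = ν + M.mulVec ν := by
    intro ν
    simp [hΦdef, Matrix.toLin'_apply, Matrix.add_mulVec, Matrix.one_mulVec]
  -- phase invariance
  have hphase : ∀ ν, dot (h - g) (Φ ν) = dot (h - g) ν := by
    intro ν
    rw [hΦ, dot_add_right', hdotM, hK1]
    ring
  -- symbol transformation
  have happ : ∀ (y μ : Fin N → ℝ) (i : Fin N),
      tLinv B y μ i = -μ i + (1 / 2 : ℝ) * dot (B y (Pi.single i 1)) μ := by
    intro y μ i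
    simp [tLinv, Linv, dot_add_left', dot_neg_left', dot_single_left', dot_smul_left']
  have hsym : ∀ ν, tLinv B h (Φ ν) = tLinv B x ν := by
    intro ν
    funext i
    rw [happ, happ, hΦ]
    have hz : dot (B h (Pi.single i 1)) (M.mulVec ν) = 0 := by
      rw [hdotM, hnil, hnil, dot_zero_left']
      ring
    rw [dot_add_right', hz, Pi.add_apply, hmulVec]
    ring
  -- change of variables
  have hcv := integral_comp_det_one' Φ hΦdet
    (fun ν => Complex.exp (Complex.I * (dot (h - g) ν : ℝ)) * khat (tLinv B h ν) * u g)
  show (∫ ν : Fin N → ℝ, Complex.exp (Complex.I * (dot (h - g) ν : ℝ)) *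
          khat (tLinv B x ν) * u g) =
    ∫ ν : Fin N → ℝ, Complex.exp (Complex.I * (dot (h - g) ν : ℝ)) * khat (tLinv B h ν) * u g
  rw [← hcv]
  refine integral_congr_ae (Filter.Eventually.of_forall fun ν => ?_)
  simp only
  rw [hphase, hsym]
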